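/- If x ∈ M₂(ℂ) satisfies ‖x‖ = 1, ‖1 + x‖ = 2 and ‖1 − x‖ = 2, then x is hermitian (x* = x) and tr(x) = 0. -/

import Mathlib

open scoped Matrix.Norms.L2Operator InnerProductSpace

local notation "E" => EuclideanSpace ℂ (Fin 2)

lemma aux_exists_max (T : E →L[ℂ] E) : ∃ v : E, ‖v‖ = 1 ∧ ‖T v‖ = ‖T‖ := by
  have hne : (Metric.sphere (0 : E) 1).Nonempty :=
    NormedSpace.sphere_nonempty.mpr zero_le_one
  obtain ⟨v, hvs, hmax⟩ := (isCompact_sphere (0 : E) 1).exists_isMaxOn hne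
    (T.continuous.norm.continuousOn)
  rw [mem_sphere_zero_iff_norm] at hvs
  refine ⟨v, hvs, le_antisymm (by simpa [hvs] using T.le_opNorm v) ?_⟩
  refine T.opNorm_le_bound' (norm_nonneg _) (fun u hu => ?_)
  have hw : (‖u‖⁻¹ • u) ∈ Metric.sphere (0 : E) 1 := by
    simp [mem_sphere_zero_iff_norm, norm_smul, inv_mul_cancel₀ hu]
  have := hmax hw
  simp only [Set.mem_setOf_eq, ContinuousLinearMap.map_smul_of_tower, norm_smul, norm_inv,
    norm_norm] at this
  have hu' : (0:ℝ) < ‖u‖ := lt_of_le_of_ne (norm_nonneg _) (Ne.symm hu)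
  calc ‖T u‖ = ‖u‖ * (‖u‖⁻¹ * ‖T u‖) := by field_simp
    _ ≤ ‖u‖ * ‖T v‖ := by nlinarith
    _ = ‖T v‖ * ‖u‖ := mul_comm _ _

theorem stmt2 (x : Matrix (Fin 2) (Fin 2) ℂ)
    (hx : ‖x‖ = 1)
    (hplus : ‖(1 : Matrix (Fin 2) (Fin 2) ℂ) + x‖ = 2)
    (hminus : ‖(1 : Matrix (Fin 2) (Fin 2) ℂ) - x‖ = 2) :
    x.conjTranspose = x ∧ x.trace = 0 := by
  classical
  set T : E →L[ℂ] E := Matrix.toEuclideanCLM (n := Fin 2) (𝕜 := ℂ) x with hTdef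
  have hT : ‖T‖ = 1 := by rw [← Matrix.cstar_norm_def]; exact hx
  have hTp : ‖(1 : E →L[ℂ] E) + T‖ = 2 := by
    rw [hTdef, ← map_one (Matrix.toEuclideanCLM (n := Fin 2) (𝕜 := ℂ)), ← map_add,
      ← Matrix.cstar_norm_def]
    exact hplus
  have hTm : ‖(1 : E →L[ℂ] E) - T‖ = 2 := by
    rw [hTdef, ← map_one (Matrix.toEuclideanCLM (n := Fin 2) (𝕜 := ℂ)), ← map_sub,
      ← Matrix.cstar_norm_def]
    exact hminus
  -- eigenvector for +1
  obtain ⟨v, hv1, hv2⟩ := aux_exists_max (1 + T)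
  rw [hTp] at hv2
  have hv2' : ‖v + T v‖ = 2 := by
    simpa [ContinuousLinearMap.add_apply, ContinuousLinearMap.one_apply] using hv2
  have hTv : ‖T v‖ = 1 := by
    have h1 : ‖T v‖ ≤ 1 := by simpa [hv1, hT] using T.le_opNorm v
    have h2 := norm_add_le v (T v)
    rw [hv2', hv1] at h2
    linarith
  have hveq : v = T v :=
    eq_of_norm_eq_of_norm_add_eq (hv1.trans hTv.symm) (by rw [hv2', hv1, hTv]; norm_num)
  -- eigenvector for -1
  obtain ⟨w, hw1, hw2⟩ := aux_exists_max (1 - T)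
  rw [hTm] at hw2
  have hw2' : ‖w + -T w‖ = 2 := by
    simpa [ContinuousLinearMap.sub_apply, ContinuousLinearMap.one_apply, sub_eq_add_neg]
      using hw2
  have hTw : ‖T w‖ = 1 := by
    have h1 : ‖T w‖ ≤ 1 := by simpa [hw1, hT] using T.le_opNorm w
    have h2 := norm_add_le w (-T w)
    rw [hw2', hw1, norm_neg] at h2
    linarith
  have hweq : w = -T w :=
    eq_of_norm_eq_of_norm_add_eq
      (by rw [hw1, norm_neg, hTw]) (by rw [hw2', hw1, norm_neg, hTw]; norm_num)
  have hTweq : T w = -w := neg_eq_iff_eq_neg.mp hweq.symm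
  -- the adjoint
  set A : E →L[ℂ] E := ContinuousLinearMap.adjoint T with hAdef
  have hA : ‖A‖ = 1 := by
    rw [hAdef]
    rw [show ‖ContinuousLinearMap.adjoint T‖ = ‖T‖ from
      (ContinuousLinearMap.adjoint : (E →L[ℂ] E) ≃ₗᵢ⋆[ℂ] (E →L[ℂ] E)).norm_map T]
    exact hT
  have hvsq : RCLike.re (⟪v, v⟫_ℂ) = 1 := by
    rw [inner_self_eq_norm_sq (𝕜 := ℂ) v, hv1]; norm_num
  have hwsq : RCLike.re (⟪w, w⟫_ℂ) = 1 := by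
    rw [inner_self_eq_norm_sq (𝕜 := ℂ) w, hw1]; norm_num
  have hAv : A v = v := by
    have hre : RCLike.re (⟪A v, v⟫_ℂ) = 1 := by
      rw [hAdef, ContinuousLinearMap.adjoint_inner_left, ← hveq]
      exact hvsq
    have hnA : ‖A v‖ ≤ 1 := by simpa [hv1, hA] using A.le_opNorm v
    have hsq : ‖A v - v‖ ^ 2 ≤ 0 := by
      rw [@norm_sub_sq ℂ, hre, hv1]
      have h2 : ‖A v‖ ^ 2 ≤ 1 ^ 2 := pow_le_pow_left₀ (norm_nonneg _) hnA 2
      linarith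
    have h0 : ‖A v - v‖ = 0 :=
      pow_eq_zero_iff two_ne_zero |>.mp (le_antisymm hsq (sq_nonneg _))
    rw [← sub_eq_zero]
    exact norm_eq_zero.mp h0
  have hAw : A w = -w := by
    have hre : RCLike.re (⟪A w, w⟫_ℂ) = -1 := by
      rw [hAdef, ContinuousLinearMap.adjoint_inner_left, hTweq, inner_neg_right, map_neg, hwsq]
    have hnA : ‖A w‖ ≤ 1 := by simpa [hw1, hA] using A.le_opNorm w
    have hsq : ‖A w + w‖ ^ 2 ≤ 0 := by
      rw [@norm_add_sq ℂ, hre, hw1]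
      have h2 : ‖A w‖ ^ 2 ≤ 1 ^ 2 := pow_le_pow_left₀ (norm_nonneg _) hnA 2
      linarith
    have h0 : ‖A w + w‖ = 0 :=
      pow_eq_zero_iff two_ne_zero |>.mp (le_antisymm hsq (sq_nonneg _))
    exact eq_neg_of_add_eq_zero_left (norm_eq_zero.mp h0)
  -- orthogonality
  have hvw : ⟪v, w⟫_ℂ = 0 := by
    have h := ContinuousLinearMap.adjoint_inner_left T w v
    rw [← hAdef, hAv, hTweq, inner_neg_right] at h
    linear_combination h / 2
  -- orthonormal basis
  have horth : Orthonormal ℂ ![v, w] := by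
    rw [orthonormal_iff_ite]
    have hvv : ⟪v, v⟫_ℂ = 1 := by
      rw [inner_self_eq_norm_sq_to_K, hv1]; norm_num
    have hww : ⟪w, w⟫_ℂ = 1 := by
      rw [inner_self_eq_norm_sq_to_K, hw1]; norm_num
    have hwv : ⟪w, v⟫_ℂ = 0 := by
      rw [← inner_conj_symm, hvw, map_zero]
    intro i j
    fin_cases i <;> fin_cases j <;> simp [hvv, hww, hvw, hwv, hv1, hw1]
  have hcard : Fintype.card (Fin 2) = Module.finrank ℂ E := by
    simp [finrank_euclideanSpace]
  let b : Module.Basis (Fin 2) ℂ E :=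
    basisOfLinearIndependentOfCardEqFinrank horth.linearIndependent hcard
  have hb0 : b 0 = v := by
    rw [show b 0 = ![v, w] 0 from congrFun
      (coe_basisOfLinearIndependentOfCardEqFinrank horth.linearIndependent hcard) 0]
    rfl
  have hb1 : b 1 = w := by
    rw [show b 1 = ![v, w] 1 from congrFun
      (coe_basisOfLinearIndependentOfCardEqFinrank horth.linearIndependent hcard) 1]
    rfl
  -- hermitian
  have hmain : Matrix.toEuclideanCLM (n := Fin 2) (𝕜 := ℂ) x.conjTranspose = T := by
    rw [← Matrix.star_eq_conjTranspose, map_star, ← hTdef,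
      ContinuousLinearMap.star_eq_adjoint, ← hAdef]
    refine ContinuousLinearMap.coe_injective (Module.Basis.ext b fun i => ?_)
    fin_cases i
    · show A (b 0) = T (b 0)
      rw [hb0, hAv, ← hveq]
    · show A (b 1) = T (b 1)
      rw [hb1, hAw, hTweq]
  have hherm : x.conjTranspose = x := (Matrix.toEuclideanCLM (n := Fin 2) (𝕜 := ℂ)).injective hmain
  refine ⟨hherm, ?_⟩
  -- trace
  have htr : x.trace = LinearMap.trace ℂ E (Matrix.toEuclideanLin x) := by
    rw [Matrix.toEuclideanLin_eq_toLin,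
      LinearMap.trace_eq_matrix_trace ℂ (PiLp.basisFun 2 ℂ (Fin 2)),
      LinearMap.toMatrix_toLin]
  have hEL : ∀ u : E, Matrix.toEuclideanLin x u = T u := fun u => rfl
  rw [htr, LinearMap.trace_eq_matrix_trace ℂ b, Matrix.trace_fin_two]
  rw [LinearMap.toMatrix_apply, LinearMap.toMatrix_apply, hb0, hb1, hEL, hEL, ← hveq, hTweq, map_neg]
  rw [← hb0, ← hb1]
  simp [b.repr_self_apply]
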